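/- Let a, b, c, d ∈ ℂ⁴ with det[a b c d] ≠ 0, so that ℓ := span{a,b} and m := span{c,d} are two skew lines in P³. Let P and Q be the primal Plücker matrices of (a,b) and (c,d) respectively, and let x ∈ ℂ⁴ with x ∉ ℓ ∪ m. Define M := P x xᵀ Q − Q x xᵀ P. Then: (i) M is skew-symmetric and M ≠ 0; (ii) the kernel of M is a 2-dimensional subspace of ℂ⁴; (iii) x ∈ ker M; and (iv) ker M ∩ ℓ ≠ {0} and ker M ∩ m ≠ {0}. Thus M represents the unique line through x that meets both slits ℓ and m (the image of x under the two-slit camera). -/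

import Mathlib

open Matrix

/-- The primal Plücker matrix of a pair of vectors `x y : ℂ⁴`. -/
noncomputable def primalMat (x y : Fin 4 → ℂ) : Matrix (Fin 4) (Fin 4) ℂ :=
  !![0, x 2 * y 3 - x 3 * y 2, -(x 1 * y 3 - x 3 * y 1), x 1 * y 2 - x 2 * y 1;
     -(x 2 * y 3 - x 3 * y 2), 0, x 0 * y 3 - x 3 * y 0, -(x 0 * y 2 - x 2 * y 0);
     x 1 * y 3 - x 3 * y 1, -(x 0 * y 3 - x 3 * y 0), 0, x 0 * y 1 - x 1 * y 0;
     -(x 1 * y 2 - x 2 * y 1), x 0 * y 2 - x 2 * y 0, -(x 0 * y 1 - x 1 * y 0), 0]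

lemma dot_primalMat (p q w z : Fin 4 → ℂ) :
    w ⬝ᵥ (primalMat p q).mulVec z = (Matrix.of ![p, q, w, z]).det := by
  have h1 : (Fin.succ 2 : Fin 4) = 3 := rfl
  have h2 : (Fin.succAbove 2 2 : Fin 4) = 3 := rfl
  have h3 : (Fin.succAbove 1 2 : Fin 4) = 3 := rfl
  have h4 : (Fin.castSucc 2 : Fin 4) = 2 := rfl
  have h5 : (Fin.succAbove 3 2 : Fin 4) = 2 := rfl
  simp [primalMat, mulVec, dotProduct, Fin.sum_univ_four, Matrix.det_succ_row_zero,
    Fin.sum_univ_succ, h1, h2, h3, h4, h5]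
  ring

lemma primalMat_mulVec_left (p q : Fin 4 → ℂ) : (primalMat p q).mulVec p = 0 := by
  funext i
  fin_cases i <;> simp [primalMat, mulVec, dotProduct, Fin.sum_univ_four] <;> ring

lemma primalMat_mulVec_right (p q : Fin 4 → ℂ) : (primalMat p q).mulVec q = 0 := by
  funext i
  fin_cases i <;> simp [primalMat, mulVec, dotProduct, Fin.sum_univ_four] <;> ring

lemma primalMat_transpose (p q : Fin 4 → ℂ) : (primalMat p q)ᵀ = -(primalMat p q) := by
  ext i j
  fin_cases i <;> fin_cases j <;> simp [primalMat]

lemma mul_vecMulVec_mul (A B : Matrix (Fin 4) (Fin 4) ℂ) (x y : Fin 4 → ℂ) :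
    A * Matrix.vecMulVec x y * B = Matrix.vecMulVec (A.mulVec x) (Bᵀ.mulVec y) := by
  ext i j
  simp [Matrix.mul_apply, Matrix.vecMulVec_apply, mulVec, dotProduct, Fin.sum_univ_four]
  ring

lemma det_perm_cdab (a b c d : Fin 4 → ℂ) :
    (Matrix.of ![c, d, a, b]).det = (Matrix.of ![a, b, c, d]).det := by
  have h1 : (Fin.succ 2 : Fin 4) = 3 := rfl
  have h2 : (Fin.succAbove 2 2 : Fin 4) = 3 := rfl
  have h3 : (Fin.succAbove 1 2 : Fin 4) = 3 := rfl
  have h4 : (Fin.castSucc 2 : Fin 4) = 2 := rfl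
  have h5 : (Fin.succAbove 3 2 : Fin 4) = 2 := rfl
  simp [Matrix.det_succ_row_zero, Fin.sum_univ_succ, h1, h2, h3, h4, h5]
  ring

lemma det_perm_swap (a b c d : Fin 4 → ℂ) :
    (Matrix.of ![a, b, d, c]).det = -(Matrix.of ![a, b, c, d]).det := by
  have h1 : (Fin.succ 2 : Fin 4) = 3 := rfl
  have h2 : (Fin.succAbove 2 2 : Fin 4) = 3 := rfl
  have h3 : (Fin.succAbove 1 2 : Fin 4) = 3 := rfl
  have h4 : (Fin.castSucc 2 : Fin 4) = 2 := rfl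
  have h5 : (Fin.succAbove 3 2 : Fin 4) = 2 := rfl
  simp [Matrix.det_succ_row_zero, Fin.sum_univ_succ, h1, h2, h3, h4, h5]
  ring

lemma det_perm_cdba (a b c d : Fin 4 → ℂ) :
    (Matrix.of ![c, d, b, a]).det = -(Matrix.of ![a, b, c, d]).det := by
  rw [det_perm_swap c d a b, det_perm_cdab]

lemma det_rep_last (p q w : Fin 4 → ℂ) : (Matrix.of ![p, q, w, w]).det = 0 :=
  Matrix.det_zero_of_row_eq (i := 2) (j := 3) (by decide) rfl

set_option maxHeartbeats 2000000 in
/-- the two-slit camera formula `M = P x xᵀ Q − Q x xᵀ P` represents the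
unique line through `x` meeting both skew slits `span{a,b}` and `span{c,d}`. -/
theorem two_slit_camera_line
    (a b c d x : Fin 4 → ℂ)
    (habcd : (Matrix.of ![a, b, c, d]).det ≠ 0)
    (hxl : x ∉ Submodule.span ℂ {a, b}) (hxm : x ∉ Submodule.span ℂ {c, d}) :
    let P := primalMat a b
    let Q := primalMat c d
    let M := P * Matrix.vecMulVec x x * Q - Q * Matrix.vecMulVec x x * P
    Mᵀ = -M ∧ M ≠ 0 ∧
      Module.finrank ℂ (LinearMap.ker M.mulVecLin) = 2 ∧
      x ∈ LinearMap.ker M.mulVecLin ∧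
      LinearMap.ker M.mulVecLin ⊓ Submodule.span ℂ {a, b} ≠ ⊥ ∧
      LinearMap.ker M.mulVecLin ⊓ Submodule.span ℂ {c, d} ≠ ⊥ := by
  intro P Q M
  set D : ℂ := (Matrix.of ![a, b, c, d]).det with hDdef
  set u : Fin 4 → ℂ := Q.mulVec x with hu
  set v : Fin 4 → ℂ := P.mulVec x with hv
  -- M in rank-one form
  have hM : M = Matrix.vecMulVec u v - Matrix.vecMulVec v u := by
    show P * Matrix.vecMulVec x x * Q - Q * Matrix.vecMulVec x x * P = _
    rw [mul_vecMulVec_mul, mul_vecMulVec_mul, primalMat_transpose, primalMat_transpose]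
    ext i j
    simp only [Matrix.sub_apply, Matrix.vecMulVec_apply, Matrix.neg_mulVec, Pi.neg_apply]
    show _ - _ = u i * v j - v i * u j
    rw [hu, hv]
    ring
  have hMw : ∀ w, M.mulVec w = (v ⬝ᵥ w) • u - (u ⬝ᵥ w) • v := by
    intro w
    rw [hM]
    funext i
    simp [Matrix.sub_mulVec, Matrix.vecMulVec_apply, mulVec, dotProduct, Fin.sum_univ_four]
    ring
  -- basis from det ≠ 0
  have hli : LinearIndependent ℂ ![a, b, c, d] :=
    Matrix.linearIndependent_rows_iff_isUnit.2
      ((Matrix.isUnit_iff_isUnit_det _).2 (isUnit_iff_ne_zero.2 habcd))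
  let B : Module.Basis (Fin 4) ℂ (Fin 4 → ℂ) :=
    basisOfLinearIndependentOfCardEqFinrank hli (by simp)
  have hB : ⇑B = ![a, b, c, d] := coe_basisOfLinearIndependentOfCardEqFinrank hli _
  set s : Fin 4 → ℂ := fun i => B.repr x i with hs
  have hxrep : x = s 0 • a + s 1 • b + s 2 • c + s 3 • d := by
    have h := B.sum_repr x
    rw [Fin.sum_univ_four] at h
    rw [← h]
    simp [hB, hs]
  -- key dot products
  have haPz : ∀ z, a ⬝ᵥ P.mulVec z = 0 := by
    intro z
    rw [Matrix.dotProduct_mulVec, ← Matrix.mulVec_transpose, primalMat_transpose,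
      Matrix.neg_mulVec, primalMat_mulVec_left]
    simp
  have hbPz : ∀ z, b ⬝ᵥ P.mulVec z = 0 := by
    intro z
    rw [Matrix.dotProduct_mulVec, ← Matrix.mulVec_transpose, primalMat_transpose,
      Matrix.neg_mulVec, primalMat_mulVec_right]
    simp
  have hcQz : ∀ z, c ⬝ᵥ Q.mulVec z = 0 := by
    intro z
    rw [Matrix.dotProduct_mulVec, ← Matrix.mulVec_transpose, primalMat_transpose,
      Matrix.neg_mulVec, primalMat_mulVec_left]
    simp
  have hdQz : ∀ z, d ⬝ᵥ Q.mulVec z = 0 := by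
    intro z
    rw [Matrix.dotProduct_mulVec, ← Matrix.mulVec_transpose, primalMat_transpose,
      Matrix.neg_mulVec, primalMat_mulVec_right]
    simp
  have hcv : c ⬝ᵥ v = s 3 * D := by
    rw [hv, hxrep]
    simp only [Matrix.mulVec_add, Matrix.mulVec_smul, dotProduct_add, dotProduct_smul]
    rw [show P = primalMat a b from rfl, primalMat_mulVec_left, primalMat_mulVec_right,
      dot_primalMat, dot_primalMat, det_rep_last]
    simp [hDdef, smul_eq_mul]
  have hdv : d ⬝ᵥ v = -(s 2 * D) := by
    rw [hv, hxrep]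
    simp only [Matrix.mulVec_add, Matrix.mulVec_smul, dotProduct_add, dotProduct_smul]
    rw [show P = primalMat a b from rfl, primalMat_mulVec_left, primalMat_mulVec_right,
      dot_primalMat, dot_primalMat, det_rep_last, det_perm_swap]
    simp [hDdef, smul_eq_mul]
  have hau : a ⬝ᵥ u = s 1 * D := by
    rw [hu, hxrep]
    simp only [Matrix.mulVec_add, Matrix.mulVec_smul, dotProduct_add, dotProduct_smul]
    rw [show Q = primalMat c d from rfl, primalMat_mulVec_left, primalMat_mulVec_right,
      dot_primalMat, dot_primalMat, det_rep_last, det_perm_cdab]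
    simp [hDdef, smul_eq_mul]
  have hbu : b ⬝ᵥ u = -(s 0 * D) := by
    rw [hu, hxrep]
    simp only [Matrix.mulVec_add, Matrix.mulVec_smul, dotProduct_add, dotProduct_smul]
    rw [show Q = primalMat c d from rfl, primalMat_mulVec_left, primalMat_mulVec_right,
      dot_primalMat, dot_primalMat, det_rep_last, det_perm_cdba]
    simp [hDdef, smul_eq_mul]
  have hav : a ⬝ᵥ v = 0 := haPz x
  have hbv : b ⬝ᵥ v = 0 := hbPz x
  have hcu : c ⬝ᵥ u = 0 := hcQz x
  have hdu : d ⬝ᵥ u = 0 := hdQz x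
  -- coefficient nonvanishing
  have hs23 : ¬(s 2 = 0 ∧ s 3 = 0) := by
    rintro ⟨h2, h3⟩
    exact hxl (Submodule.mem_span_pair.2 ⟨s 0, s 1, by rw [hxrep, h2, h3]; simp⟩)
  have hs01 : ¬(s 0 = 0 ∧ s 1 = 0) := by
    rintro ⟨h0, h1⟩
    exact hxm (Submodule.mem_span_pair.2 ⟨s 2, s 3, by rw [hxrep, h0, h1]; simp [add_comm]⟩)
  have hune : u ≠ 0 := by
    intro h
    apply hs01
    constructor
    · have h' := hbu; rw [h] at h'; simp at h'
      rcases h' with h'' | h''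
      · exact h''
      · exact absurd h'' habcd
    · have h' := hau; rw [h] at h'; simp at h'
      rcases h' with h'' | h''
      · exact h''
      · exact absurd h'' habcd
  have hvne : v ≠ 0 := by
    intro h
    apply hs23
    constructor
    · have h' := hdv; rw [h] at h'; simp at h'
      rcases h' with h'' | h''
      · exact h''
      · exact absurd h'' habcd
    · have h' := hcv; rw [h] at h'; simp at h'
      rcases h' with h'' | h''
      · exact h''
      · exact absurd h'' habcd
  -- u, v linearly independent
  have huv : LinearIndependent ℂ ![u, v] := by
    rw [LinearIndependent.pair_iff]
    intro α β hαβ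
    have hc : c ⬝ᵥ (α • u + β • v) = 0 := by rw [hαβ]; simp
    have hd : d ⬝ᵥ (α • u + β • v) = 0 := by rw [hαβ]; simp
    rw [dotProduct_add, dotProduct_smul, dotProduct_smul, hcu, hcv] at hc
    rw [dotProduct_add, dotProduct_smul, dotProduct_smul, hdu, hdv] at hd
    simp only [smul_eq_mul, mul_zero, zero_add] at hc hd
    have hβ : β = 0 := by
      by_contra hβ
      apply hs23
      refine ⟨?_, ?_⟩
      · rcases mul_eq_zero.1 hd with h' | h'
        · exact absurd h' hβ
        · rcases mul_eq_zero.1 (neg_eq_zero.1 h') with h'' | h''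
          · exact h''
          · exact absurd h'' habcd
      · rcases mul_eq_zero.1 hc with h' | h'
        · exact absurd h' hβ
        · rcases mul_eq_zero.1 h' with h'' | h''
          · exact h''
          · exact absurd h'' habcd
    rw [hβ, zero_smul, add_zero] at hαβ
    refine ⟨?_, hβ⟩
    rcases smul_eq_zero.1 hαβ with h' | h'
    · exact h'
    · exact absurd h' hune
  -- kernel description
  set N : Matrix (Fin 2) (Fin 4) ℂ := Matrix.of ![u, v] with hN
  have hNmul : ∀ w, N.mulVec w = ![u ⬝ᵥ w, v ⬝ᵥ w] := by
    intro w
    funext i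
    fin_cases i <;> rfl
  have hker : LinearMap.ker M.mulVecLin = LinearMap.ker N.mulVecLin := by
    ext w
    simp only [LinearMap.mem_ker, Matrix.mulVecLin_apply]
    constructor
    · intro h
      rw [hMw] at h
      have h2 := (LinearIndependent.pair_iff.1 huv) (v ⬝ᵥ w) (-(u ⬝ᵥ w))
        (by rw [neg_smul, ← sub_eq_add_neg]; exact h)
      rw [hNmul]
      funext i
      fin_cases i
      · simpa using neg_eq_zero.1 h2.2
      · simpa using h2.1
    · intro h
      rw [hNmul] at h
      have h0 : u ⬝ᵥ w = 0 := congrFun h 0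
      have h1 : v ⬝ᵥ w = 0 := congrFun h 1
      rw [hMw, h0, h1]
      simp
  -- rank computation
  have hrankN : N.rank = 2 := by
    rw [Matrix.rank_eq_finrank_span_row]
    have hr : Set.range N.row = Set.range ![u, v] := rfl
    rw [hr, finrank_span_eq_card huv]
    simp
  have hkerN : Module.finrank ℂ (LinearMap.ker N.mulVecLin) = 2 := by
    have h := LinearMap.finrank_range_add_finrank_ker N.mulVecLin
    rw [Module.finrank_fintype_fun_eq_card, Fintype.card_fin] at h
    have hr : Module.finrank ℂ (LinearMap.range N.mulVecLin) = N.rank := rfl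
    rw [hr, hrankN] at h
    omega
  have hfr : Module.finrank ℂ (LinearMap.ker M.mulVecLin) = 2 := by
    rw [hker]; exact hkerN
  -- skewness
  have hskew : Mᵀ = -M := by
    rw [hM]
    ext i j
    simp only [Matrix.transpose_apply, Matrix.sub_apply, Matrix.neg_apply,
      Matrix.vecMulVec_apply]
    ring
  -- M ≠ 0
  have hMne : M ≠ 0 := by
    intro h
    rw [h] at hfr
    have hk : LinearMap.ker (0 : Matrix (Fin 4) (Fin 4) ℂ).mulVecLin = ⊤ := by
      ext w
      simp [Matrix.mulVecLin_apply, Matrix.zero_mulVec]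
    rw [hk, finrank_top, Module.finrank_fintype_fun_eq_card] at hfr
    simp at hfr
  -- x in kernel
  have hvx : v ⬝ᵥ x = 0 := by
    rw [dotProduct_comm, hv, show P = primalMat a b from rfl, dot_primalMat, det_rep_last]
  have hux : u ⬝ᵥ x = 0 := by
    rw [dotProduct_comm, hu, show Q = primalMat c d from rfl, dot_primalMat, det_rep_last]
  have hxker : x ∈ LinearMap.ker M.mulVecLin := by
    rw [LinearMap.mem_ker, Matrix.mulVecLin_apply, hMw, hvx, hux]
    simp
  -- pairs a,b and c,d independent
  have hab : LinearIndependent ℂ ![a, b] := by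
    have h := hli.comp ![0, 1] (by decide)
    have he : ![a, b, c, d] ∘ ![0, 1] = ![a, b] := by
      funext i; fin_cases i <;> rfl
    rwa [he] at h
  have hcd : LinearIndependent ℂ ![c, d] := by
    have h := hli.comp ![2, 3] (by decide)
    have he : ![a, b, c, d] ∘ ![2, 3] = ![c, d] := by
      funext i; fin_cases i <;> rfl
    rwa [he] at h
  -- intersection with span {a, b}
  have hinfl : LinearMap.ker M.mulVecLin ⊓ Submodule.span ℂ {a, b} ≠ ⊥ := by
    set w₁ : Fin 4 → ℂ := (b ⬝ᵥ u) • a - (a ⬝ᵥ u) • b with hw₁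
    have hw₁ne : w₁ ≠ 0 := by
      intro h
      have h2 := (LinearIndependent.pair_iff.1 hab) (b ⬝ᵥ u) (-(a ⬝ᵥ u))
        (by rw [neg_smul, ← sub_eq_add_neg]; exact h)
      apply hs01
      constructor
      · have := h2.1
        rw [hbu, neg_eq_zero] at this
        rcases mul_eq_zero.1 this with h'' | h''
        · exact h''
        · exact absurd h'' habcd
      · have := neg_eq_zero.1 h2.2
        rw [hau] at this
        rcases mul_eq_zero.1 this with h'' | h''
        · exact h''
        · exact absurd h'' habcd
    have hw₁ker : w₁ ∈ LinearMap.ker M.mulVecLin := by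
      rw [LinearMap.mem_ker, Matrix.mulVecLin_apply, hMw]
      have h1 : v ⬝ᵥ w₁ = 0 := by
        rw [hw₁, dotProduct_sub, dotProduct_smul, dotProduct_smul,
          dotProduct_comm v a, dotProduct_comm v b, hav, hbv]
        simp
      have h2 : u ⬝ᵥ w₁ = 0 := by
        rw [hw₁, dotProduct_sub, dotProduct_smul, dotProduct_smul,
          dotProduct_comm u a, dotProduct_comm u b]
        simp [smul_eq_mul]
        ring
      rw [h1, h2]
      simp
    have hw₁span : w₁ ∈ Submodule.span ℂ {a, b} :=
      Submodule.mem_span_pair.2 ⟨b ⬝ᵥ u, -(a ⬝ᵥ u), by rw [hw₁, neg_smul, ← sub_eq_add_neg]⟩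
    intro hbot
    have : w₁ ∈ (⊥ : Submodule ℂ (Fin 4 → ℂ)) := by
      rw [← hbot]
      exact Submodule.mem_inf.2 ⟨hw₁ker, hw₁span⟩
    exact hw₁ne (Submodule.mem_bot ℂ |>.1 this)
  -- intersection with span {c, d}
  have hinfm : LinearMap.ker M.mulVecLin ⊓ Submodule.span ℂ {c, d} ≠ ⊥ := by
    set w₂ : Fin 4 → ℂ := (d ⬝ᵥ v) • c - (c ⬝ᵥ v) • d with hw₂
    have hw₂ne : w₂ ≠ 0 := by
      intro h
      have h2 := (LinearIndependent.pair_iff.1 hcd) (d ⬝ᵥ v) (-(c ⬝ᵥ v))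
        (by rw [neg_smul, ← sub_eq_add_neg]; exact h)
      apply hs23
      constructor
      · have := h2.1
        rw [hdv, neg_eq_zero] at this
        rcases mul_eq_zero.1 this with h'' | h''
        · exact h''
        · exact absurd h'' habcd
      · have := neg_eq_zero.1 h2.2
        rw [hcv] at this
        rcases mul_eq_zero.1 this with h'' | h''
        · exact h''
        · exact absurd h'' habcd
    have hw₂ker : w₂ ∈ LinearMap.ker M.mulVecLin := by
      rw [LinearMap.mem_ker, Matrix.mulVecLin_apply, hMw]
      have h1 : u ⬝ᵥ w₂ = 0 := by
        rw [hw₂, dotProduct_sub, dotProduct_smul, dotProduct_smul,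
          dotProduct_comm u c, dotProduct_comm u d, hcu, hdu]
        simp
      have h2 : v ⬝ᵥ w₂ = 0 := by
        rw [hw₂, dotProduct_sub, dotProduct_smul, dotProduct_smul,
          dotProduct_comm v c, dotProduct_comm v d]
        simp [smul_eq_mul]
        ring
      rw [h1, h2]
      simp
    have hw₂span : w₂ ∈ Submodule.span ℂ {c, d} :=
      Submodule.mem_span_pair.2 ⟨d ⬝ᵥ v, -(c ⬝ᵥ v), by rw [hw₂, neg_smul, ← sub_eq_add_neg]⟩
    intro hbot
    have : w₂ ∈ (⊥ : Submodule ℂ (Fin 4 → ℂ)) := by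
      rw [← hbot]
      exact Submodule.mem_inf.2 ⟨hw₂ker, hw₂span⟩
    exact hw₂ne (Submodule.mem_bot ℂ |>.1 this)
  exact ⟨hskew, hMne, hfr, hxker, hinfl, hinfm⟩
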